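/- There is a constant p₀ such that the following holds for every prime p > p₀ with p ≡ 3 (mod 4). Let A, B, C be three pairwise distinct points of Π = F_p × F_p forming a non-equilateral triangle, i.e. the three squared side-lengths ‖A−B‖, ‖B−C‖, ‖A−C‖ are not all equal. Then for any partition of Π into two color classes there exist points x, y, z of the same color with ‖x−y‖ = ‖A−B‖, ‖y−z‖ = ‖B−C‖ and ‖x−z‖ = ‖A−C‖ (a monochromatic triangle congruent to the triangle ABC). -/

import Mathlib

/-- The squared length `‖x‖ = x₁² + x₂²` of a point of `F_p × F_p`. -/
def sqNorm {p : ℕ} (x : ZMod p × ZMod p) : ZMod p := x.1 ^ 2 + x.2 ^ 2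

namespace MonoTri

variable {p : ℕ} [Fact p.Prime]

instance : NeZero p := ⟨(Fact.out : p.Prime).ne_zero⟩

abbrev Pt (p : ℕ) := ZMod p × ZMod p

def pmul (a b : Pt p) : Pt p := (a.1*b.1 - a.2*b.2, a.1*b.2 + a.2*b.1)

lemma sqNorm_pmul (a b : Pt p) : sqNorm (pmul a b) = sqNorm a * sqNorm b := by
  simp only [sqNorm, pmul]; ring

lemma sqNorm_zero_iff (hp3 : p % 4 = 3) (x : Pt p) : sqNorm x = 0 ↔ x = 0 := by
  constructor
  · intro h
    by_contra hx
    have hsq : ¬ IsSquare (-1 : ZMod p) := by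
      rw [ZMod.exists_sq_eq_neg_one_iff]; simp [hp3]
    have h2 : x.2 ≠ 0 := by
      intro h2
      apply hx
      have h1 : x.1 ^ 2 = 0 := by simpa [sqNorm, h2] using h
      have : x.1 = 0 := by exact pow_eq_zero_iff (by norm_num) |>.mp h1
      exact Prod.ext this h2
    apply hsq
    refine ⟨x.1 / x.2, ?_⟩
    have : x.1 ^ 2 = - x.2 ^ 2 := by
      have := h; simp only [sqNorm] at this; linear_combination this
    field_simp
    linear_combination -this
  · rintro rfl; simp [sqNorm]

open Finset

def Sph (d : ZMod p) : Finset (Pt p) := univ.filter (fun z => sqNorm z = d)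

def rinv (w z : Pt p) : Pt p :=
  ((sqNorm w)⁻¹ * (z.1*w.1 + z.2*w.2), (sqNorm w)⁻¹ * (z.2*w.1 - z.1*w.2))

lemma pmul_rinv {w : Pt p} (hw : sqNorm w ≠ 0) (z : Pt p) : pmul (rinv w z) w = z := by
  have : w.1^2 + w.2^2 ≠ 0 := hw
  ext <;> simp only [pmul, rinv, sqNorm] at * <;> field_simp <;> ring

lemma rinv_pmul {w : Pt p} (hw : sqNorm w ≠ 0) (r : Pt p) : rinv w (pmul r w) = r := by
  have : w.1^2 + w.2^2 ≠ 0 := hw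
  ext <;> simp only [pmul, rinv, sqNorm] at * <;> field_simp <;> ring

lemma sqNorm_rinv {w z : Pt p} (hw : sqNorm w ≠ 0) (hz : sqNorm z = sqNorm w) :
    sqNorm (rinv w z) = 1 := by
  have h1 : sqNorm (rinv w z) * sqNorm w = sqNorm z := by rw [← sqNorm_pmul, pmul_rinv hw]
  rw [hz] at h1
  exact mul_right_cancel₀ hw (by rw [h1, one_mul])

/-- reindexing a sum over the unit circle as a sum over the sphere of radius `sqNorm w`. -/
lemma sum_rot_eq_sum_sph {M : Type*} [AddCommMonoid M] {w : Pt p} (hw : sqNorm w ≠ 0)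
    (f : Pt p → M) :
    ∑ r ∈ Sph (1 : ZMod p), f (pmul r w) = ∑ z ∈ Sph (sqNorm w), f z := by
  refine Finset.sum_nbij' (fun r => pmul r w) (fun z => rinv w z) ?_ ?_ ?_ ?_ ?_
  · intro r hr
    simp only [Sph, mem_filter, mem_univ, true_and] at hr ⊢
    rw [sqNorm_pmul, hr, one_mul]
  · intro z hz
    simp only [Sph, mem_filter, mem_univ, true_and] at hz ⊢
    exact sqNorm_rinv hw hz
  · intro r _; exact rinv_pmul hw r
  · intro z _; exact pmul_rinv hw z
  · intro r _; rfl

lemma card_sph_eq {d : ZMod p} (hd : d ≠ 0) : (Sph d).card = (Sph (1 : ZMod p)).card := by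
  obtain ⟨a, b, hab⟩ := ZMod.sq_add_sq p d
  have hw : sqNorm ((a, b) : Pt p) = d := hab
  have := sum_rot_eq_sum_sph (M := ℕ) (w := ((a,b) : Pt p)) (by rw [hw]; exact hd) (fun _ => 1)
  simpa [hw] using this.symm

lemma card_sph_one (hp3 : p % 4 = 3) : (Sph (1 : ZMod p)).card = p + 1 := by
  classical
  have hcard : Fintype.card (Pt p) = p ^ 2 := by
    simp [Fintype.card_prod, ZMod.card, sq]
  have key : (univ.filter (fun z : Pt p => sqNorm z ≠ 0)).card
      = ∑ d ∈ (univ : Finset (ZMod p)).erase 0, (Sph d).card := by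
    rw [Finset.card_eq_sum_card_fiberwise (f := sqNorm)
      (t := (univ : Finset (ZMod p)).erase 0)]
    · refine Finset.sum_congr rfl fun d hd => ?_
      congr 1
      rw [Finset.filter_filter]
      refine Finset.filter_congr fun z _ => ?_
      have hd0 : d ≠ 0 := (Finset.mem_erase.mp hd).1
      constructor
      · rintro ⟨_, h⟩; exact h
      · intro h; exact ⟨by rw [h]; exact hd0, h⟩
    · intro x hx
      simp only [Finset.coe_filter, Set.mem_setOf_eq, mem_univ, true_and] at hx
      exact Finset.mem_erase.mpr ⟨hx, mem_univ _⟩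
  have hsum : ∑ d ∈ (univ : Finset (ZMod p)).erase 0, (Sph d).card
      = (p - 1) * (Sph (1 : ZMod p)).card := by
    have h1 : ∑ d ∈ (univ : Finset (ZMod p)).erase 0, (Sph d).card
        = ∑ _d ∈ (univ : Finset (ZMod p)).erase 0, (Sph (1 : ZMod p)).card :=
      Finset.sum_congr rfl fun d hd => card_sph_eq (Finset.mem_erase.mp hd).1
    rw [h1, Finset.sum_const, smul_eq_mul]
    congr 1
    rw [Finset.card_erase_of_mem (mem_univ _)]
    simp [ZMod.card]
  have hleft : (univ.filter (fun z : Pt p => sqNorm z ≠ 0)).card = p ^ 2 - 1 := by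
    have : (univ.filter (fun z : Pt p => ¬ (sqNorm z = 0))).card
        = Fintype.card (Pt p) - (univ.filter (fun z : Pt p => sqNorm z = 0)).card := by
      rw [Finset.filter_not, Finset.card_sdiff_of_subset (Finset.filter_subset _ _)]
      rw [Finset.card_univ]
    rw [this, hcard]
    congr 1
    have : (univ.filter (fun z : Pt p => sqNorm z = 0)) = {(0 : Pt p)} := by
      ext z
      simp only [mem_filter, mem_univ, true_and, mem_singleton]
      exact sqNorm_zero_iff hp3 z
    rw [this]; simp
  have hp : 1 < p := (Fact.out : p.Prime).one_lt
  have hmain : p ^ 2 - 1 = (p - 1) * (Sph (1 : ZMod p)).card := by rw [← hleft, key, hsum]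
  obtain ⟨k, hk⟩ : ∃ k, p = k + 2 := ⟨p - 2, by omega⟩
  subst hk
  have e1 : (k + 2) ^ 2 = k * k + 4 * k + 4 := by ring
  have hA : (k + 2) ^ 2 - 1 = k * k + 4 * k + 3 := by omega
  have hB : (k + 2) - 1 = k + 1 := by omega
  rw [hA, hB] at hmain
  have hC : k * k + 4 * k + 3 = (k + 1) * (k + 3) := by ring
  have := Nat.eq_of_mul_eq_mul_left (Nat.succ_pos k) (hmain.symm.trans hC)
  omega



open Complex

noncomputable def ψ (p : ℕ) [NeZero p] : AddChar (ZMod p) ℂ := ZMod.stdAddChar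

def dotp (a b : Pt p) : ZMod p := a.1 * b.1 + a.2 * b.2

lemma psi_ortho (a : ZMod p) : ∑ s : ZMod p, ψ p (s * a) = if a = 0 then (p : ℂ) else 0 := by
  have := AddChar.sum_mulShift (ψ := ψ p) a (ZMod.isPrimitive_stdAddChar p)
  rw [this]
  simp [ZMod.card]

lemma conj_psi (t : ZMod p) : (starRingEnd ℂ) (ψ p t) = ψ p (-t) := by
  have h1 : ψ p t * ψ p (-t) = 1 := by
    rw [← AddChar.map_add_eq_mul]; simp
  have h2 : Complex.normSq (ψ p t) = 1 := by
    have : ψ p t = (ZMod.toCircle t : ℂ) := rfl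
    rw [this]
    simpa using Circle.normSq_coe (ZMod.toCircle t)
  have h3 : (starRingEnd ℂ) (ψ p t) * ψ p t = 1 := by
    rw [mul_comm, Complex.mul_conj]; exact_mod_cast h2
  calc (starRingEnd ℂ) (ψ p t) = (starRingEnd ℂ) (ψ p t) * (ψ p t * ψ p (-t)) := by rw [h1, mul_one]
    _ = ((starRingEnd ℂ) (ψ p t) * ψ p t) * ψ p (-t) := by ring
    _ = ψ p (-t) := by rw [h3, one_mul]

lemma psi_dot_ortho (m : Pt p) :
    ∑ x : Pt p, ψ p (dotp m x) = if m = 0 then ((p : ℂ))^2 else 0 := by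
  rw [Fintype.sum_prod_type]
  have : ∀ x1 x2 : ZMod p, ψ p (dotp m (x1, x2)) = ψ p (x1 * m.1) * ψ p (x2 * m.2) := by
    intro x1 x2
    rw [← AddChar.map_add_eq_mul]
    congr 1
    simp only [dotp]; ring
  calc ∑ x1 : ZMod p, ∑ x2 : ZMod p, ψ p (dotp m (x1, x2))
      = ∑ x1 : ZMod p, (ψ p (x1 * m.1) * ∑ x2 : ZMod p, ψ p (x2 * m.2)) := by
        refine Finset.sum_congr rfl fun x1 _ => ?_
        rw [Finset.mul_sum]
        exact Finset.sum_congr rfl fun x2 _ => this x1 x2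
    _ = (∑ x1 : ZMod p, ψ p (x1 * m.1)) * (∑ x2 : ZMod p, ψ p (x2 * m.2)) := by
        rw [← Finset.sum_mul]
    _ = (if m.1 = 0 then (p : ℂ) else 0) * (if m.2 = 0 then (p : ℂ) else 0) := by
        rw [psi_ortho, psi_ortho]
    _ = if m = 0 then ((p : ℂ))^2 else 0 := by
        by_cases h1 : m.1 = 0 <;> by_cases h2 : m.2 = 0 <;>
          simp [h1, h2, Prod.ext_iff, sq]


noncomputable def Gam (p : ℕ) [NeZero p] (s : ZMod p) : ℂ := ∑ x : Pt p, ψ p (s * sqNorm x)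

lemma two_ne_zero' (hp3 : p % 4 = 3) : (2 : ZMod p) ≠ 0 := by
  intro h
  have h2 : ((2 : ℕ) : ZMod p) = 0 := by exact_mod_cast h
  rw [ZMod.natCast_eq_zero_iff] at h2
  have := Nat.le_of_dvd (by norm_num) h2
  omega

lemma Gam_eq (hp3 : p % 4 = 3) {s : ZMod p} (hs : s ≠ 0) : Gam p s = -p := by
  classical
  have fiber : Gam p s = ∑ d : ZMod p, ∑ x ∈ Sph d, ψ p (s * d) := by
    rw [Gam, ← Finset.sum_fiberwise univ sqNorm (fun x => ψ p (s * sqNorm x))]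
    exact Finset.sum_congr rfl fun d _ => Finset.sum_congr rfl fun x hx => by
      rw [(Finset.mem_filter.mp hx).2]
  have hsph : ∀ d : ZMod p, d ≠ 0 → ((Sph d).card : ℂ) = (p : ℂ) + 1 := by
    intro d hd
    rw [card_sph_eq hd, card_sph_one hp3]
    push_cast; ring
  have hsph0 : ((Sph (0 : ZMod p)).card : ℂ) = 1 := by
    have : (Sph (0 : ZMod p)) = {(0 : Pt p)} := by
      ext z
      simp only [Sph, Finset.mem_filter, Finset.mem_univ, true_and, Finset.mem_singleton]
      exact sqNorm_zero_iff hp3 z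
    rw [this]; simp
  have fib2 : Gam p s = ∑ d : ZMod p, ((Sph d).card : ℂ) * ψ p (s * d) := by
    rw [fiber]
    exact Finset.sum_congr rfl fun d _ => by rw [Finset.sum_const, nsmul_eq_mul]
  have split : Gam p s
      = 1 + ∑ d ∈ (univ : Finset (ZMod p)).erase 0, ((Sph d).card : ℂ) * ψ p (s * d) := by
    rw [fib2, ← Finset.sum_erase_add _ _ (Finset.mem_univ (0 : ZMod p)), add_comm]
    congr 1
    rw [hsph0, one_mul, mul_zero, AddChar.map_zero_eq_one]
  have e2 : ∑ d ∈ (univ : Finset (ZMod p)).erase 0, ((Sph d).card : ℂ) * ψ p (s * d)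
      = ((p : ℂ) + 1) * ∑ d ∈ (univ : Finset (ZMod p)).erase 0, ψ p (s * d) := by
    rw [Finset.mul_sum]
    exact Finset.sum_congr rfl fun d hd => by
      rw [hsph d (Finset.mem_erase.mp hd).1]
  have e3 : ∑ d ∈ (univ : Finset (ZMod p)).erase 0, ψ p (s * d) = -1 := by
    have h0 : ∑ d : ZMod p, ψ p (s * d) = 0 := by
      have := psi_ortho (p := p) s
      simp_rw [mul_comm] at this
      rw [this, if_neg hs]
    have := Finset.sum_erase_add (univ : Finset (ZMod p)) (fun d => ψ p (s * d))
      (Finset.mem_univ (0 : ZMod p))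
    rw [h0] at this
    simp only [mul_zero, AddChar.map_zero_eq_one] at this
    linear_combination this
  rw [split, e2, e3]
  ring





lemma sqNorm_neg (u : Pt p) : sqNorm (-u) = sqNorm u := by simp [sqNorm]

lemma four_ne_zero' (hp3 : p % 4 = 3) : (4 : ZMod p) ≠ 0 := by
  have h2 := two_ne_zero' (p := p) hp3
  have : (4 : ZMod p) = 2 * 2 := by norm_num
  rw [this]
  exact mul_ne_zero h2 h2

lemma gauss_shift (hp3 : p % 4 = 3) {s : ZMod p} (hs : s ≠ 0) (m : Pt p) :
    ∑ x : Pt p, ψ p (s * sqNorm x + dotp m x) = ψ p (- sqNorm m / (4 * s)) * Gam p s := by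
  have h2 : (2 : ZMod p) ≠ 0 := two_ne_zero' hp3
  have h2s : (2 : ZMod p) * s ≠ 0 := mul_ne_zero h2 hs
  set c : Pt p := ((2 * s)⁻¹ * m.1, (2 * s)⁻¹ * m.2) with hc
  have key : ∀ x : Pt p, s * sqNorm (x - c) + dotp m (x - c)
      = (- sqNorm m / (4 * s)) + s * sqNorm x := by
    intro x
    simp only [sqNorm, dotp, hc, Prod.fst_sub, Prod.snd_sub]
    have h4 : (4 : ZMod p) * s ≠ 0 := by
      have : (4 : ZMod p) = 2 * 2 := by norm_num
      rw [this, mul_assoc]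
      exact mul_ne_zero h2 h2s
    have h4' : (4 : ZMod p) ≠ 0 := by
      have : (4 : ZMod p) = 2 * 2 := by norm_num
      rw [this]; exact mul_ne_zero h2 h2
    field_simp
    ring
  have reindex : ∑ x : Pt p, ψ p (s * sqNorm x + dotp m x)
      = ∑ x : Pt p, ψ p (s * sqNorm (x - c) + dotp m (x - c)) := by
    refine Finset.sum_nbij' (fun x => x + c) (fun x => x - c) ?_ ?_ ?_ ?_ ?_ <;>
      intro x _ <;> simp
  rw [reindex]
  calc ∑ x : Pt p, ψ p (s * sqNorm (x - c) + dotp m (x - c))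
      = ∑ x : Pt p, ψ p (- sqNorm m / (4 * s)) * ψ p (s * sqNorm x) := by
        refine Finset.sum_congr rfl fun x _ => ?_
        rw [key x, AddChar.map_add_eq_mul]
    _ = ψ p (- sqNorm m / (4 * s)) * Gam p s := by
        rw [← Finset.mul_sum]; rfl

lemma inv_core (hp3 : p % 4 = 3) {s : ZMod p} (hs : s ≠ 0) (u : Pt p) :
    ∑ m : Pt p, ψ p (- sqNorm m / (4 * s)) * ψ p (dotp m u) * Gam p s
      = (p : ℂ)^2 * ψ p (s * sqNorm u) := by
  have step1 : ∀ m : Pt p, ψ p (- sqNorm m / (4 * s)) * ψ p (dotp m u) * Gam p s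
      = ∑ x : Pt p, ψ p (s * sqNorm x + dotp m x) * ψ p (dotp m u) := by
    intro m
    rw [← Finset.sum_mul, gauss_shift hp3 hs m]
    ring
  simp_rw [step1]
  rw [Finset.sum_comm]
  have inner : ∀ x : Pt p, ∑ m : Pt p, ψ p (s * sqNorm x + dotp m x) * ψ p (dotp m u)
      = ψ p (s * sqNorm x) * ∑ m : Pt p, ψ p (dotp (x + u) m) := by
    intro x
    rw [Finset.mul_sum]
    refine Finset.sum_congr rfl fun mm _ => ?_
    rw [← AddChar.map_add_eq_mul, ← AddChar.map_add_eq_mul]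
    congr 1
    simp only [dotp, Prod.fst_add, Prod.snd_add]
    ring
  simp_rw [inner, psi_dot_ortho]
  have : ∀ x : Pt p, ψ p (s * sqNorm x) * (if x + u = 0 then ((p:ℂ))^2 else 0)
      = if x = -u then (p:ℂ)^2 * ψ p (s * sqNorm x) else 0 := by
    intro x
    by_cases h : x + u = 0
    · have hx : x = -u := eq_neg_of_add_eq_zero_left h
      rw [if_pos h, if_pos hx]; ring
    · have hx : ¬ (x = -u) := fun hh => h (by rw [hh]; ring)
      rw [if_neg h, if_neg hx, mul_zero]
  simp_rw [this]
  rw [Finset.sum_ite_eq' univ (-u) (fun x => (p:ℂ)^2 * ψ p (s * sqNorm x))]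
  simp [sqNorm_neg]





lemma dotp_comm (a b : Pt p) : dotp a b = dotp b a := by simp only [dotp]; ring

noncomputable def Ff (ε : Pt p → ℝ) (m : Pt p) : ℂ := ∑ x : Pt p, (ε x : ℂ) * ψ p (dotp m x)

noncomputable def Sd (ε : Pt p → ℝ) (d : ZMod p) : ℝ :=
  ∑ z ∈ Sph d, ∑ x : Pt p, ε x * ε (x + z)

noncomputable def Kl (p : ℕ) [NeZero p] (a b : ZMod p) : ℂ :=
  ∑ t ∈ (univ : Finset (ZMod p)).erase 0, ψ p (a * t + b * t⁻¹)

lemma FfF (ε : Pt p → ℝ) (m : Pt p) :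
    Ff ε m * Ff ε (-m) = ∑ x : Pt p, ∑ y : Pt p, (ε x : ℂ) * (ε y : ℂ) * ψ p (dotp m (x - y)) := by
  rw [Ff, Ff, Finset.sum_mul_sum]
  refine Finset.sum_congr rfl fun x _ => Finset.sum_congr rfl fun y _ => ?_
  rw [mul_mul_mul_comm, ← AddChar.map_add_eq_mul]
  congr 1
  simp only [dotp, Prod.fst_sub, Prod.snd_sub, Prod.fst_neg, Prod.snd_neg]
  ring

lemma parseval (ε : Pt p → ℝ) :
    ∑ m : Pt p, Ff ε m * Ff ε (-m) = (p:ℂ)^2 * ∑ x : Pt p, (ε x : ℂ)^2 := by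
  simp_rw [FfF]
  rw [Finset.sum_comm]
  have h1 : ∀ x : Pt p, ∑ m : Pt p, ∑ y : Pt p, (ε x : ℂ) * (ε y : ℂ) * ψ p (dotp m (x - y))
      = ∑ y : Pt p, (ε x : ℂ) * (ε y : ℂ) * ∑ m : Pt p, ψ p (dotp (x - y) m) := by
    intro x
    rw [Finset.sum_comm]
    refine Finset.sum_congr rfl fun y _ => ?_
    rw [Finset.mul_sum]
    exact Finset.sum_congr rfl fun m _ => by rw [dotp_comm]
  simp_rw [h1, psi_dot_ortho]
  have h2 : ∀ x y : Pt p, (ε x : ℂ) * (ε y : ℂ) * (if x - y = 0 then ((p:ℂ))^2 else 0)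
      = if y = x then (p:ℂ)^2 * ((ε x : ℂ) * (ε y : ℂ)) else 0 := by
    intro x y
    by_cases h : x - y = 0
    · have hxy : y = x := (sub_eq_zero.mp h).symm
      rw [if_pos h, if_pos hxy]; ring
    · have hxy : ¬ (y = x) := fun hh => h (by rw [hh, sub_self])
      rw [if_neg h, if_neg hxy, mul_zero]
  simp_rw [h2]
  rw [Finset.mul_sum]
  refine Finset.sum_congr rfl fun x _ => ?_
  rw [Finset.sum_ite_eq' univ x (fun y => (p:ℂ)^2 * ((ε x : ℂ) * (ε y : ℂ)))]
  simp [sq]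

lemma master (hp3 : p % 4 = 3) (ε : Pt p → ℝ) (d : ZMod p) :
    ((p:ℂ))^3 * ((Sd ε d : ℝ) : ℂ) = (p:ℂ)^2 * (∑ x : Pt p, (ε x : ℂ))^2
      - (p:ℂ) * ∑ m : Pt p, (Ff ε m * Ff ε (-m)) * Kl p (-d) (- sqNorm m / 4) := by
  classical
  set Q : ZMod p → ℂ :=
    fun s => ∑ x : Pt p, ∑ y : Pt p, (ε x : ℂ) * (ε y : ℂ) * ψ p (s * (sqNorm (y - x) - d))
    with hQ
  -- Step A
  have stepA : (p:ℂ) * ((Sd ε d : ℝ) : ℂ) = ∑ s : ZMod p, Q s := by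
    have swap : ∑ s : ZMod p, Q s
        = ∑ x : Pt p, ∑ y : Pt p, (ε x : ℂ) * (ε y : ℂ)
            * ∑ s : ZMod p, ψ p (s * (sqNorm (y - x) - d)) := by
      rw [hQ, Finset.sum_comm]
      refine Finset.sum_congr rfl fun x _ => ?_
      rw [Finset.sum_comm]
      refine Finset.sum_congr rfl fun y _ => ?_
      rw [Finset.mul_sum]
    rw [swap]
    have delta : ∀ x y : Pt p, ∑ s : ZMod p, ψ p (s * (sqNorm (y - x) - d))
        = if sqNorm (y - x) = d then (p : ℂ) else 0 := by
      intro x y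
      rw [psi_ortho]
      congr 1
      simp [sub_eq_zero]
    simp_rw [delta]
    have inner : ∀ x : Pt p, ∑ y : Pt p, (ε x : ℂ) * (ε y : ℂ)
        * (if sqNorm (y - x) = d then (p : ℂ) else 0)
        = (p : ℂ) * ∑ z ∈ Sph d, (ε x : ℂ) * (ε (x + z) : ℂ) := by
      intro x
      have reidx : ∑ y : Pt p, (ε x : ℂ) * (ε y : ℂ)
          * (if sqNorm (y - x) = d then (p : ℂ) else 0)
          = ∑ z : Pt p, (ε x : ℂ) * (ε (x + z) : ℂ)
            * (if sqNorm z = d then (p : ℂ) else 0) := by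
        refine Finset.sum_nbij' (fun y => y - x) (fun z => x + z) ?_ ?_ ?_ ?_ ?_ <;>
          intro a _ <;> simp [add_sub_cancel_left, add_comm]
      rw [reidx]
      rw [Finset.mul_sum]
      rw [← Finset.sum_filter_add_sum_filter_not univ (fun z => sqNorm z = d)]
      have hz : ∀ z ∈ univ.filter (fun z : Pt p => ¬ sqNorm z = d),
          (ε x : ℂ) * (ε (x + z) : ℂ) * (if sqNorm z = d then (p : ℂ) else 0) = 0 := by
        intro z hz
        rw [if_neg (Finset.mem_filter.mp hz).2, mul_zero]
      rw [Finset.sum_eq_zero hz, add_zero]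
      refine Finset.sum_congr rfl fun z hzz => ?_
      rw [if_pos (Finset.mem_filter.mp hzz).2]
      ring
    simp_rw [inner]
    rw [← Finset.mul_sum]
    congr 1
    rw [Finset.sum_comm, Sd]
    push_cast
    rfl
  -- Step B : Q 0
  have stepB : Q 0 = (∑ x : Pt p, (ε x : ℂ))^2 := by
    rw [hQ, sq, Finset.sum_mul_sum]
    refine Finset.sum_congr rfl fun x _ => Finset.sum_congr rfl fun y _ => ?_
    rw [zero_mul, AddChar.map_zero_eq_one, mul_one]
  -- Step C : s ≠ 0
  have stepC : ∀ s ∈ (univ : Finset (ZMod p)).erase 0, (p:ℂ)^2 * Q s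
      = - (p:ℂ) * ∑ m : Pt p, (Ff ε m * Ff ε (-m)) * ψ p ((-d) * s + (- sqNorm m / 4) * s⁻¹) := by
    intro s hs0
    have hs : s ≠ 0 := (Finset.mem_erase.mp hs0).1
    have hGam := Gam_eq hp3 hs
    have hp0 : ((p:ℂ)) ≠ 0 := by
      exact_mod_cast (Nat.cast_ne_zero (R := ℂ)).mpr (Fact.out : p.Prime).ne_zero
    -- expand the m-sum into a double (x,y) sum
    have expand : ∀ m : Pt p, (Ff ε m * Ff ε (-m)) * ψ p ((-d) * s + (- sqNorm m / 4) * s⁻¹)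
        = ∑ x : Pt p, ∑ y : Pt p, (ε x : ℂ) * (ε y : ℂ)
            * (ψ p (-(s*d)) * (ψ p (- sqNorm m / (4 * s)) * ψ p (dotp m (x - y)))) := by
      intro m
      rw [FfF, Finset.sum_mul]
      refine Finset.sum_congr rfl fun x _ => ?_
      rw [Finset.sum_mul]
      refine Finset.sum_congr rfl fun y _ => ?_
      have harg : (-d) * s + (- sqNorm m / 4) * s⁻¹ = (-(s*d)) + (- sqNorm m / (4 * s)) := by
        rw [div_eq_mul_inv, div_eq_mul_inv, mul_inv, ← mul_assoc]
        ring
      rw [harg, AddChar.map_add_eq_mul]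
      ring
    have swap3 : ∑ m : Pt p, (Ff ε m * Ff ε (-m)) * ψ p ((-d) * s + (- sqNorm m / 4) * s⁻¹)
        = ∑ x : Pt p, ∑ y : Pt p, (ε x : ℂ) * (ε y : ℂ) * ψ p (-(s*d))
            * ∑ m : Pt p, ψ p (- sqNorm m / (4 * s)) * ψ p (dotp m (x - y)) := by
      simp_rw [expand]
      rw [Finset.sum_comm]
      refine Finset.sum_congr rfl fun x _ => ?_
      rw [Finset.sum_comm]
      refine Finset.sum_congr rfl fun y _ => ?_
      rw [Finset.mul_sum]
      refine Finset.sum_congr rfl fun m _ => ?_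
      ring
    have core : ∀ x y : Pt p, ∑ m : Pt p, ψ p (- sqNorm m / (4 * s)) * ψ p (dotp m (x - y))
        = -((p:ℂ) * ψ p (s * sqNorm (x - y))) := by
      intro x y
      have hic := inv_core hp3 hs (x - y)
      have : (∑ m : Pt p, ψ p (- sqNorm m / (4 * s)) * ψ p (dotp m (x - y))) * Gam p s
          = (p:ℂ)^2 * ψ p (s * sqNorm (x - y)) := by
        rw [Finset.sum_mul]; exact hic
      rw [hGam] at this
      have h2 : (∑ m : Pt p, ψ p (- sqNorm m / (4 * s)) * ψ p (dotp m (x - y))) * (-(p:ℂ))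
          = (-((p:ℂ) * ψ p (s * sqNorm (x - y)))) * (-(p:ℂ)) := by
        rw [this]; ring
      exact mul_right_cancel₀ (by simpa using hp0) h2
    have qform : (p:ℂ) * Q s = ∑ x : Pt p, ∑ y : Pt p, (ε x : ℂ) * (ε y : ℂ) * ψ p (-(s*d))
            * ((p:ℂ) * ψ p (s * sqNorm (x - y))) := by
      rw [hQ, Finset.mul_sum]
      refine Finset.sum_congr rfl fun x _ => ?_
      rw [Finset.mul_sum]
      refine Finset.sum_congr rfl fun y _ => ?_
      have harg : s * (sqNorm (y - x) - d) = (-(s*d)) + s * sqNorm (x - y) := by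
        have : sqNorm (y - x) = sqNorm (x - y) := by rw [← neg_sub x y, sqNorm_neg]
        rw [this]; ring
      rw [harg, AddChar.map_add_eq_mul]
      ring
    calc (p:ℂ)^2 * Q s = (p:ℂ) * ((p:ℂ) * Q s) := by ring
      _ = (p:ℂ) * ∑ x : Pt p, ∑ y : Pt p, (ε x : ℂ) * (ε y : ℂ) * ψ p (-(s*d))
            * ((p:ℂ) * ψ p (s * sqNorm (x - y))) := by rw [qform]
      _ = (p:ℂ) * ∑ x : Pt p, ∑ y : Pt p, -((ε x : ℂ) * (ε y : ℂ) * ψ p (-(s*d))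
            * ∑ m : Pt p, ψ p (- sqNorm m / (4 * s)) * ψ p (dotp m (x - y))) := by
          refine congrArg _ (Finset.sum_congr rfl fun x _ => Finset.sum_congr rfl fun y _ => ?_)
          rw [core x y]; ring
      _ = - ((p:ℂ) * ∑ x : Pt p, ∑ y : Pt p, (ε x : ℂ) * (ε y : ℂ) * ψ p (-(s*d))
            * ∑ m : Pt p, ψ p (- sqNorm m / (4 * s)) * ψ p (dotp m (x - y))) := by
          simp only [Finset.sum_neg_distrib]
          ring
      _ = - (p:ℂ) * ∑ m : Pt p, (Ff ε m * Ff ε (-m)) * ψ p ((-d) * s + (- sqNorm m / 4) * s⁻¹) := by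
          rw [← swap3]; ring
  -- assemble
  have key : ∑ s ∈ (univ : Finset (ZMod p)).erase 0, (p:ℂ)^2 * Q s
      = - (p:ℂ) * ∑ m : Pt p, (Ff ε m * Ff ε (-m)) * Kl p (-d) (- sqNorm m / 4) := by
    rw [Finset.sum_congr rfl stepC, ← Finset.mul_sum]
    congr 1
    rw [Finset.sum_comm]
    exact Finset.sum_congr rfl fun m _ => by rw [← Finset.mul_sum]; rfl
  calc (p:ℂ)^3 * ((Sd ε d : ℝ) : ℂ) = (p:ℂ)^2 * ((p:ℂ) * ((Sd ε d : ℝ) : ℂ)) := by ring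
    _ = (p:ℂ)^2 * ∑ s : ZMod p, Q s := by rw [stepA]
    _ = (p:ℂ)^2 * Q 0 + ∑ s ∈ (univ : Finset (ZMod p)).erase 0, (p:ℂ)^2 * Q s := by
        rw [← Finset.add_sum_erase univ Q (Finset.mem_univ 0), mul_add]
        congr 1
        exact Finset.mul_sum _ _ _
    _ = (p:ℂ)^2 * (∑ x : Pt p, (ε x : ℂ))^2
          - (p:ℂ) * ∑ m : Pt p, (Ff ε m * Ff ε (-m)) * Kl p (-d) (- sqNorm m / 4) := by
        rw [stepB, key]; ring


lemma Kl_def (a b : ZMod p) :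
    Kl p a b = ∑ t ∈ (univ : Finset (ZMod p)).erase 0, ψ p (a * t + b * t⁻¹) := rfl

lemma kl_b0 {a : ZMod p} (ha : a ≠ 0) : Kl p a 0 = -1 := by
  rw [Kl_def]
  simp_rw [zero_mul, add_zero]
  have h0 : ∑ t : ZMod p, ψ p (a * t) = 0 := by
    have := psi_ortho (p := p) a
    simp_rw [mul_comm] at this
    rw [this, if_neg ha]
  have := Finset.sum_erase_add (univ : Finset (ZMod p)) (fun t => ψ p (a * t))
    (Finset.mem_univ (0 : ZMod p))
  rw [h0] at this
  simp only [mul_zero, AddChar.map_zero_eq_one] at this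
  linear_combination this

lemma kl_conj (a b : ZMod p) : (starRingEnd ℂ) (Kl p a b) = Kl p a b := by
  rw [Kl_def, map_sum]
  simp_rw [conj_psi]
  refine Finset.sum_nbij' (fun t => -t) (fun t => -t) ?_ ?_ ?_ ?_ ?_ <;> intro t ht
  · exact Finset.mem_erase.mpr
      ⟨neg_ne_zero.mpr (Finset.mem_erase.mp ht).1, Finset.mem_univ _⟩
  · exact Finset.mem_erase.mpr
      ⟨neg_ne_zero.mpr (Finset.mem_erase.mp ht).1, Finset.mem_univ _⟩
  · exact neg_neg t
  · exact neg_neg t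
  · congr 1
    rw [inv_neg]
    ring

lemma kl_re (a b : ZMod p) : Kl p a b = (((Kl p a b).re : ℝ) : ℂ) :=
  (Complex.conj_eq_iff_re.mp (kl_conj a b)).symm

lemma kl_scale {a : ZMod p} (b : ZMod p) (ha : a ≠ 0) : Kl p a b = Kl p 1 (a * b) := by
  rw [Kl_def, Kl_def]
  refine Finset.sum_nbij' (fun t => a * t) (fun u => a⁻¹ * u) ?_ ?_ ?_ ?_ ?_ <;> intro t ht
  · exact Finset.mem_erase.mpr
      ⟨mul_ne_zero ha (Finset.mem_erase.mp ht).1, Finset.mem_univ _⟩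
  · exact Finset.mem_erase.mpr
      ⟨mul_ne_zero (inv_ne_zero ha) (Finset.mem_erase.mp ht).1, Finset.mem_univ _⟩
  · show a⁻¹ * (a * t) = t
    rw [← mul_assoc, inv_mul_cancel₀ ha, one_mul]
  · show a * (a⁻¹ * t) = t
    rw [← mul_assoc, mul_inv_cancel₀ ha, one_mul]
  · congr 1
    have htz : t ≠ 0 := (Finset.mem_erase.mp ht).1
    field_simp

noncomputable def Sol (p : ℕ) [NeZero p] : Finset ((ZMod p × ZMod p) × (ZMod p × ZMod p)) :=
  ((((univ : Finset (ZMod p)).erase 0) ×ˢ ((univ : Finset (ZMod p)).erase 0)) ×ˢ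
    (((univ : Finset (ZMod p)).erase 0) ×ˢ ((univ : Finset (ZMod p)).erase 0))).filter
    (fun q => q.1.1 + q.1.2 + q.2.1 + q.2.2 = 0 ∧
      q.1.1⁻¹ + q.1.2⁻¹ + q.2.1⁻¹ + q.2.2⁻¹ = 0)

lemma kl_moment : ∑ a : ZMod p, ∑ b : ZMod p, (Kl p a b)^4 = (p:ℂ)^2 * ((Sol p).card : ℂ) := by
  classical
  set E := (univ : Finset (ZMod p)).erase 0 with hE
  set D := (E ×ˢ E) ×ˢ (E ×ˢ E) with hD
  set σ : (ZMod p × ZMod p) × (ZMod p × ZMod p) → ZMod p :=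
    fun q => q.1.1 + q.1.2 + q.2.1 + q.2.2 with hσ
  set τ : (ZMod p × ZMod p) × (ZMod p × ZMod p) → ZMod p :=
    fun q => q.1.1⁻¹ + q.1.2⁻¹ + q.2.1⁻¹ + q.2.2⁻¹ with hτ
  have expand : ∀ a b : ZMod p, (Kl p a b)^4
      = ∑ q ∈ D, ψ p (σ q * a) * ψ p (τ q * b) := by
    intro a b
    have h2 : (Kl p a b)^2 = ∑ t ∈ E ×ˢ E,
        ψ p (a * (t.1 + t.2) + b * (t.1⁻¹ + t.2⁻¹)) := by
      rw [sq, Kl_def, Finset.sum_mul_sum, Finset.sum_product]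
      refine Finset.sum_congr rfl fun t1 _ => Finset.sum_congr rfl fun t2 _ => ?_
      rw [← AddChar.map_add_eq_mul]
      congr 1
      ring
    have h4 : (Kl p a b)^4 = (Kl p a b)^2 * (Kl p a b)^2 := by ring
    have hsplit : ∑ q ∈ D, ψ p (σ q * a) * ψ p (τ q * b)
        = ∑ t1 ∈ E ×ˢ E, ∑ t2 ∈ E ×ˢ E, ψ p (σ (t1, t2) * a) * ψ p (τ (t1, t2) * b) := by
      rw [hD]
      exact Finset.sum_product _ _ (fun q => ψ p (σ q * a) * ψ p (τ q * b))
    rw [h4, h2, Finset.sum_mul_sum, hsplit]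
    refine Finset.sum_congr rfl fun t1 _ => Finset.sum_congr rfl fun t2 _ => ?_
    rw [← AddChar.map_add_eq_mul, ← AddChar.map_add_eq_mul]
    congr 1
    simp only [hσ, hτ]
    ring
  have h1 : ∀ q : (ZMod p × ZMod p) × (ZMod p × ZMod p),
      ∑ a : ZMod p, ∑ b : ZMod p, ψ p (σ q * a) * ψ p (τ q * b)
      = (∑ a : ZMod p, ψ p (a * σ q)) * (∑ b : ZMod p, ψ p (b * τ q)) := by
    intro q
    rw [Finset.sum_mul_sum]
    refine Finset.sum_congr rfl fun a _ => Finset.sum_congr rfl fun b _ => ?_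
    rw [mul_comm (σ q) a, mul_comm (τ q) b]
  calc ∑ a : ZMod p, ∑ b : ZMod p, (Kl p a b)^4
      = ∑ a : ZMod p, ∑ b : ZMod p, ∑ q ∈ D, ψ p (σ q * a) * ψ p (τ q * b) := by
        exact Finset.sum_congr rfl fun a _ => Finset.sum_congr rfl fun b _ => expand a b
    _ = ∑ a : ZMod p, ∑ q ∈ D, ∑ b : ZMod p, ψ p (σ q * a) * ψ p (τ q * b) :=
        Finset.sum_congr rfl fun a _ => Finset.sum_comm
    _ = ∑ q ∈ D, ∑ a : ZMod p, ∑ b : ZMod p, ψ p (σ q * a) * ψ p (τ q * b) :=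
        Finset.sum_comm
    _ = ∑ q ∈ D, (if σ q = 0 then (p:ℂ) else 0) * (if τ q = 0 then (p:ℂ) else 0) := by
        refine Finset.sum_congr rfl fun q _ => ?_
        rw [h1 q, psi_ortho, psi_ortho]
    _ = ∑ q ∈ D, (if σ q = 0 ∧ τ q = 0 then (p:ℂ)^2 else 0) := by
        refine Finset.sum_congr rfl fun q _ => ?_
        by_cases h1' : σ q = 0 <;> by_cases h2' : τ q = 0 <;> simp [h1', h2', sq]
    _ = (p:ℂ)^2 * ((Sol p).card : ℂ) := by
        rw [← Finset.sum_filter, Finset.sum_const, nsmul_eq_mul]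
        rw [mul_comm]
        congr 2


lemma sol_card_le : (Sol p).card ≤ 3 * p^2 := by
  classical
  set T1 : Finset ((ZMod p × ZMod p) × (ZMod p × ZMod p)) :=
    Finset.image (fun ab : ZMod p × ZMod p => ((ab.1, ab.2), (-ab.1, -ab.2))) univ with hT1
  set T2 : Finset ((ZMod p × ZMod p) × (ZMod p × ZMod p)) :=
    Finset.image (fun ab : ZMod p × ZMod p => ((ab.1, ab.2), (-ab.2, -ab.1))) univ with hT2
  set T3 : Finset ((ZMod p × ZMod p) × (ZMod p × ZMod p)) :=
    Finset.image (fun ab : ZMod p × ZMod p => ((ab.1, -ab.1), (ab.2, -ab.2))) univ with hT3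
  have hsub : Sol p ⊆ T1 ∪ T2 ∪ T3 := by
    intro q hq
    obtain ⟨⟨s1, s2⟩, s3, s4⟩ := q
    simp only [Sol, Finset.mem_filter, Finset.mem_product, Finset.mem_erase,
      Finset.mem_univ, and_true] at hq
    obtain ⟨⟨⟨h1z, h2z⟩, h3z, h4z⟩, h1, h2⟩ := hq
    have h2' : s2*s3*s4 + s1*s3*s4 + s1*s2*s4 + s1*s2*s3 = 0 := by
      have e : s1*s2*s3*s4 * (s1⁻¹ + s2⁻¹ + s3⁻¹ + s4⁻¹)
          = s2*s3*s4 + s1*s3*s4 + s1*s2*s4 + s1*s2*s3 := by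
        field_simp
      rw [← e, h2, mul_zero]
    have key : (s1 + s2) * ((s1 + s3) * (s1 + s4)) = 0 := by
      linear_combination s1^2 * h1 + h2'
    rcases mul_eq_zero.mp key with hk | hk'
    · -- s2 = -s1, s4 = -s3 : T3
      have e2 : s2 = -s1 := by linear_combination hk
      have e4 : s4 = -s3 := by linear_combination h1 - hk
      refine Finset.mem_union.mpr (Or.inr ?_)
      rw [hT3]
      refine Finset.mem_image.mpr ⟨(s1, s3), Finset.mem_univ _, ?_⟩
      simp [e2, e4]
    · rcases mul_eq_zero.mp hk' with hk | hk
      · -- s3 = -s1, s4 = -s2 : T1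
        have e3 : s3 = -s1 := by linear_combination hk
        have e4 : s4 = -s2 := by linear_combination h1 - hk
        refine Finset.mem_union.mpr (Or.inl (Finset.mem_union.mpr (Or.inl ?_)))
        rw [hT1]
        refine Finset.mem_image.mpr ⟨(s1, s2), Finset.mem_univ _, ?_⟩
        simp [e3, e4]
      · -- s4 = -s1, s3 = -s2 : T2
        have e4 : s4 = -s1 := by linear_combination hk
        have e3 : s3 = -s2 := by linear_combination h1 - hk
        refine Finset.mem_union.mpr (Or.inl (Finset.mem_union.mpr (Or.inr ?_)))
        rw [hT2]
        refine Finset.mem_image.mpr ⟨(s1, s2), Finset.mem_univ _, ?_⟩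
        simp [e3, e4]
  have hcard : ∀ T ∈ [T1, T2, T3], T.card ≤ p^2 := by
    intro T hT
    have huniv : (univ : Finset (ZMod p × ZMod p)).card = p^2 := by
      rw [Finset.card_univ]
      simp [Fintype.card_prod, ZMod.card, sq]
    fin_cases hT <;>
      exact le_trans (Finset.card_image_le) (le_of_eq huniv)
  calc (Sol p).card ≤ (T1 ∪ T2 ∪ T3).card := Finset.card_le_card hsub
    _ ≤ T1.card + T2.card + T3.card := by
        refine le_trans (Finset.card_union_le _ _) ?_
        have := Finset.card_union_le T1 T2
        omega
    _ ≤ 3 * p^2 := by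
        have c1 := hcard T1 (by simp)
        have c2 := hcard T2 (by simp)
        have c3 := hcard T3 (by simp)
        omega

lemma kl_point_bound (hp : 1000 ≤ p) {t : ZMod p} (ht : t ≠ 0) :
    |(Kl p 1 t).re| ≤ ((p:ℝ) + 1) / 4 := by
  classical
  set E := (univ : Finset (ZMod p)).erase 0 with hE
  -- real fourth moment
  have hmom : ∑ a : ZMod p, ∑ b : ZMod p, ((Kl p a b).re)^4
      = (p:ℝ)^2 * ((Sol p).card : ℝ) := by
    have := kl_moment (p := p)
    have hcast : ((∑ a : ZMod p, ∑ b : ZMod p, ((Kl p a b).re)^4 : ℝ) : ℂ)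
        = ∑ a : ZMod p, ∑ b : ZMod p, (Kl p a b)^4 := by
      push_cast
      exact Finset.sum_congr rfl fun a _ => Finset.sum_congr rfl fun b _ => by
        rw [← kl_re]
    apply Complex.ofReal_injective
    rw [hcast, this]
    push_cast
    ring
  -- lower bound by the fiber over t
  set f : ZMod p × ZMod p → ℝ := fun q => ((Kl p q.1 q.2).re)^4 with hf
  have hfiber : ∑ q ∈ E.image (fun a => (a, a⁻¹ * t)), f q
      = ((p : ℝ) - 1) * ((Kl p 1 t).re)^4 := by
    rw [Finset.sum_image (by
      intro a _ b _ hab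
      exact (Prod.ext_iff.mp hab).1)]
    have : ∀ a ∈ E, f (a, a⁻¹ * t) = ((Kl p 1 t).re)^4 := by
      intro a ha
      have haz : a ≠ 0 := (Finset.mem_erase.mp ha).1
      simp only [hf]
      rw [kl_scale _ haz, mul_inv_cancel_left₀ haz]
    rw [Finset.sum_congr rfl this, Finset.sum_const, nsmul_eq_mul]
    congr 1
    rw [hE, Finset.card_erase_of_mem (Finset.mem_univ _)]
    simp [ZMod.card]
    have : 1 ≤ p := le_trans (by norm_num) hp
    push_cast [Nat.cast_sub this]
    ring
  have hle : ∑ q ∈ E.image (fun a => (a, a⁻¹ * t)), f q ≤ ∑ q : ZMod p × ZMod p, f q := by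
    refine Finset.sum_le_sum_of_subset_of_nonneg (Finset.subset_univ _) ?_
    intro q _ _
    positivity
  have htot : ∑ q : ZMod p × ZMod p, f q = (p:ℝ)^2 * ((Sol p).card : ℝ) := by
    rw [← hmom, ← Finset.sum_product']
    rfl
  have hsol : ((Sol p).card : ℝ) ≤ 3 * (p:ℝ)^2 := by
    have := sol_card_le (p := p)
    exact_mod_cast this
  have hkey : ((p : ℝ) - 1) * ((Kl p 1 t).re)^4 ≤ 3 * (p:ℝ)^4 := by
    rw [← hfiber] at *
    calc ∑ q ∈ E.image (fun a => (a, a⁻¹ * t)), f q ≤ (p:ℝ)^2 * ((Sol p).card : ℝ) := by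
          rw [← htot]; exact hle
      _ ≤ (p:ℝ)^2 * (3 * (p:ℝ)^2) := by
          refine mul_le_mul_of_nonneg_left hsol (by positivity)
      _ = 3 * (p:ℝ)^4 := by ring
  -- conclude
  by_contra hcon
  push_neg at hcon
  set x := (Kl p 1 t).re with hx
  have hpR : (1000 : ℝ) ≤ (p : ℝ) := by exact_mod_cast hp
  have h1 : (((p:ℝ) + 1) / 4)^4 ≤ x^4 := by
    have h4 : |x|^4 = x^4 := by
      rw [pow_abs]
      exact abs_of_nonneg (by positivity)
    rw [← h4]
    exact pow_le_pow_left₀ (by positivity) (le_of_lt hcon) 4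
  have h2 : ((p:ℝ) - 1) * (((p:ℝ) + 1) / 4)^4 ≤ 3 * (p:ℝ)^4 :=
    le_trans (mul_le_mul_of_nonneg_left h1 (by linarith)) hkey
  nlinarith [hpR, sq_nonneg ((p:ℝ)), pow_pos (show (0:ℝ) < (p:ℝ) by linarith) 3,
    pow_pos (show (0:ℝ) < (p:ℝ) by linarith) 4]


lemma Ff_neg (ε : Pt p → ℝ) (m : Pt p) : Ff ε (-m) = (starRingEnd ℂ) (Ff ε m) := by
  rw [Ff, Ff, map_sum]
  refine Finset.sum_congr rfl fun x _ => ?_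
  rw [map_mul, conj_psi, Complex.conj_ofReal]
  congr 2
  simp only [dotp, Prod.fst_neg, Prod.snd_neg]
  ring

lemma FfF_normSq (ε : Pt p → ℝ) (m : Pt p) :
    Ff ε m * Ff ε (-m) = ((Complex.normSq (Ff ε m) : ℝ) : ℂ) := by
  rw [Ff_neg, Complex.mul_conj]

lemma parseval_real (ε : Pt p → ℝ) (hε : ∀ x, ε x = 1 ∨ ε x = -1) :
    ∑ m : Pt p, Complex.normSq (Ff ε m) = (p:ℝ)^4 := by
  have hc := parseval ε
  simp_rw [FfF_normSq] at hc
  have hsq : ∀ x : Pt p, (ε x : ℂ)^2 = 1 := by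
    intro x
    rcases hε x with h | h <;> rw [h] <;> norm_num
  rw [Finset.sum_congr rfl (fun x _ => hsq x), Finset.sum_const, Finset.card_univ] at hc
  have hcard : Fintype.card (Pt p) = p^2 := by simp [Fintype.card_prod, ZMod.card, sq]
  rw [hcard] at hc
  apply Complex.ofReal_injective
  push_cast at hc ⊢
  rw [hc]
  push_cast
  ring

lemma sd_lower (hp3 : p % 4 = 3) (hp : 1000 ≤ p) (ε : Pt p → ℝ)
    (hε : ∀ x, ε x = 1 ∨ ε x = -1) {d : ZMod p} (hd : d ≠ 0) :
    -(((p:ℝ) + 1) * (p:ℝ)^2 / 4) ≤ Sd ε d := by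
  classical
  have hp0 : (0:ℝ) < (p:ℝ) := by
    have : (1000:ℝ) ≤ (p:ℝ) := by exact_mod_cast hp
    linarith
  -- real form of the master identity
  have hmaster := master hp3 ε d
  have hKlcast : ∀ m : Pt p, (Ff ε m * Ff ε (-m)) * Kl p (-d) (- sqNorm m / 4)
      = (((Complex.normSq (Ff ε m) * (Kl p (-d) (- sqNorm m / 4)).re : ℝ)) : ℂ) := by
    intro m
    rw [FfF_normSq, kl_re (-d) (- sqNorm m / 4)]
    push_cast
    simp [Complex.ofReal_re]
  simp_rw [hKlcast] at hmaster
  have hreal : (p:ℝ)^3 * Sd ε d = (p:ℝ)^2 * (∑ x : Pt p, ε x)^2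
      - (p:ℝ) * ∑ m : Pt p, Complex.normSq (Ff ε m) * (Kl p (-d) (- sqNorm m / 4)).re := by
    apply Complex.ofReal_injective
    push_cast
    rw [hmaster]
    push_cast
    ring
  -- bound the Kloosterman terms
  have hterm : ∀ m : Pt p, (Kl p (-d) (- sqNorm m / 4)).re ≤ ((p:ℝ) + 1) / 4 := by
    intro m
    by_cases hm : m = 0
    · subst hm
      have h0 : - sqNorm (0 : Pt p) / 4 = 0 := by
        simp [sqNorm]
      rw [h0, kl_b0 (neg_ne_zero.mpr hd)]
      norm_num
      linarith
    · have hnm : sqNorm m ≠ 0 := fun h => hm ((sqNorm_zero_iff hp3 m).mp h)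
      have h4 : (4 : ZMod p) ≠ 0 := four_ne_zero' hp3
      have harg : (-d) * (- sqNorm m / 4) ≠ 0 := by
        apply mul_ne_zero (neg_ne_zero.mpr hd)
        rw [div_ne_zero_iff]
        exact ⟨neg_ne_zero.mpr hnm, h4⟩
      rw [kl_scale _ (neg_ne_zero.mpr hd)]
      calc (Kl p 1 ((-d) * (- sqNorm m / 4))).re ≤ |(Kl p 1 ((-d) * (- sqNorm m / 4))).re| :=
            le_abs_self _
        _ ≤ ((p:ℝ) + 1) / 4 := kl_point_bound hp harg
  have hsumle : ∑ m : Pt p, Complex.normSq (Ff ε m) * (Kl p (-d) (- sqNorm m / 4)).re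
      ≤ ((p:ℝ) + 1) / 4 * (p:ℝ)^4 := by
    calc ∑ m : Pt p, Complex.normSq (Ff ε m) * (Kl p (-d) (- sqNorm m / 4)).re
        ≤ ∑ m : Pt p, Complex.normSq (Ff ε m) * (((p:ℝ) + 1) / 4) := by
          refine Finset.sum_le_sum fun m _ => ?_
          exact mul_le_mul_of_nonneg_left (hterm m) (Complex.normSq_nonneg _)
      _ = (((p:ℝ) + 1) / 4) * ∑ m : Pt p, Complex.normSq (Ff ε m) := by
          rw [← Finset.sum_mul]; ring
      _ = ((p:ℝ) + 1) / 4 * (p:ℝ)^4 := by rw [parseval_real ε hε]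
  have hlower : (p:ℝ)^3 * Sd ε d ≥ - ((p:ℝ) * (((p:ℝ) + 1) / 4 * (p:ℝ)^4)) := by
    rw [hreal]
    have h1 : (0:ℝ) ≤ (p:ℝ)^2 * (∑ x : Pt p, ε x)^2 := by positivity
    have h2 : (p:ℝ) * ∑ m : Pt p, Complex.normSq (Ff ε m) * (Kl p (-d) (- sqNorm m / 4)).re
        ≤ (p:ℝ) * (((p:ℝ) + 1) / 4 * (p:ℝ)^4) :=
      mul_le_mul_of_nonneg_left hsumle (le_of_lt hp0)
    linarith
  have hfinal : (p:ℝ)^3 * (-(((p:ℝ) + 1) * (p:ℝ)^2 / 4)) ≤ (p:ℝ)^3 * Sd ε d := by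
    calc (p:ℝ)^3 * (-(((p:ℝ) + 1) * (p:ℝ)^2 / 4))
        = - ((p:ℝ) * (((p:ℝ) + 1) / 4 * (p:ℝ)^4)) := by ring
      _ ≤ (p:ℝ)^3 * Sd ε d := hlower
  exact le_of_mul_le_mul_left hfinal (by positivity)

lemma pmul_sub (r a b : Pt p) : pmul r a - pmul r b = pmul r (a - b) := by
  ext <;> simp only [pmul, Prod.fst_sub, Prod.snd_sub] <;> ring

lemma count_pairs (ε : Pt p → ℝ) (P Q : Pt p) (hw : sqNorm (Q - P) ≠ 0) :
    ∑ r ∈ Sph (1 : ZMod p), ∑ t : Pt p, ε (pmul r P + t) * ε (pmul r Q + t)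
      = Sd ε (sqNorm (Q - P)) := by
  have hper : ∀ r : Pt p, ∑ t : Pt p, ε (pmul r P + t) * ε (pmul r Q + t)
      = ∑ x : Pt p, ε x * ε (x + pmul r (Q - P)) := by
    intro r
    refine Finset.sum_nbij' (fun t => pmul r P + t) (fun x => x - pmul r P) ?_ ?_ ?_ ?_ ?_ <;>
      intro a _
    · exact Finset.mem_univ _
    · exact Finset.mem_univ _
    · exact add_sub_cancel_left _ _
    · exact add_sub_cancel _ _
    · have harg : pmul r Q + a = (pmul r P + a) + pmul r (Q - P) := by
        rw [← pmul_sub]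
        abel
      rw [harg]
  rw [Finset.sum_congr rfl fun r _ => hper r]
  rw [sum_rot_eq_sum_sph hw (fun z => ∑ x : Pt p, ε x * ε (x + z))]
  rfl


lemma sqNorm_sub_ne_zero (hp3 : p % 4 = 3) {P Q : Pt p} (h : P ≠ Q) : sqNorm (Q - P) ≠ 0 := by
  intro hz
  exact h (by have := (sqNorm_zero_iff hp3 _).mp hz; rw [sub_eq_zero] at this; exact this.symm)

end MonoTri

open MonoTri Finset

/-- There is a constant `p₀` such that for every prime `p > p₀` with
`p ≡ 3 (mod 4)` the following holds. Let `A, B, C` be three pairwise distinct points of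
`Π = F_p × F_p` forming a non-equilateral triangle (the squared side-lengths are not all
equal). Then for any partition of `Π` into two color classes there is a monochromatic
triangle congruent to `ABC`. -/
theorem monochromatic_congruent_triangle_finite :
    ∃ p₀ : ℕ, ∀ p : ℕ, p.Prime → p₀ < p → p % 4 = 3 →
      ∀ A B C : ZMod p × ZMod p, A ≠ B → B ≠ C → A ≠ C →
        ¬(sqNorm (A - B) = sqNorm (B - C) ∧ sqNorm (B - C) = sqNorm (A - C)) →
        ∀ X Y : Set (ZMod p × ZMod p), X ∪ Y = Set.univ → Disjoint X Y →
          ∃ x y z : ZMod p × ZMod p,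
            sqNorm (x - y) = sqNorm (A - B) ∧
            sqNorm (y - z) = sqNorm (B - C) ∧
            sqNorm (x - z) = sqNorm (A - C) ∧
            ((x ∈ X ∧ y ∈ X ∧ z ∈ X) ∨ (x ∈ Y ∧ y ∈ Y ∧ z ∈ Y)) := by
  classical
  refine ⟨1000, ?_⟩
  intro p hp hp0 hp3 A B C hAB hBC hAC _hneq X Y hXY hdisj
  haveI : Fact p.Prime := ⟨hp⟩
  by_contra hcon
  set ε : Pt p → ℝ := fun x => if x ∈ X then 1 else -1 with hε
  have hval : ∀ x, ε x = 1 ∨ ε x = -1 := by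
    intro x
    by_cases h : x ∈ X
    · left; simp [hε, h]
    · right; simp [hε, h]
  have hcover : ∀ u : Pt p, u ∉ X → u ∈ Y := by
    intro u hu
    have : u ∈ X ∪ Y := by rw [hXY]; exact Set.mem_univ u
    exact this.resolve_left hu
  have hnAB : sqNorm (B - A) ≠ 0 := sqNorm_sub_ne_zero hp3 hAB
  have hnBC : sqNorm (C - B) ≠ 0 := sqNorm_sub_ne_zero hp3 hBC
  have hnAC : sqNorm (C - A) ≠ 0 := sqNorm_sub_ne_zero hp3 hAC
  have hp1000 : 1000 ≤ p := le_of_lt hp0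
  -- per rigid motion, the triple is not monochromatic
  have hzero : ∀ r ∈ Sph (1 : ZMod p), ∀ t : Pt p,
      (1 : ℝ) + (ε (pmul r A + t) * ε (pmul r B + t)
        + ε (pmul r B + t) * ε (pmul r C + t)
        + ε (pmul r A + t) * ε (pmul r C + t)) = 0 := by
    intro r hr t
    have hr1 : sqNorm r = 1 := (Finset.mem_filter.mp hr).2
    set x := pmul r A + t with hxd
    set y := pmul r B + t with hyd
    set z := pmul r C + t with hzd
    have hdist : ∀ P Q : Pt p, (pmul r P + t) - (pmul r Q + t) = pmul r (P - Q) := by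
      intro P Q
      rw [← pmul_sub]
      abel
    have h1 : sqNorm (x - y) = sqNorm (A - B) := by
      rw [hxd, hyd, hdist, sqNorm_pmul, hr1, one_mul]
    have h2 : sqNorm (y - z) = sqNorm (B - C) := by
      rw [hyd, hzd, hdist, sqNorm_pmul, hr1, one_mul]
    have h3 : sqNorm (x - z) = sqNorm (A - C) := by
      rw [hxd, hzd, hdist, sqNorm_pmul, hr1, one_mul]
    have hnm : ¬((x ∈ X ∧ y ∈ X ∧ z ∈ X) ∨ (x ∈ Y ∧ y ∈ Y ∧ z ∈ Y)) := by
      intro hm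
      exact hcon ⟨x, y, z, h1, h2, h3, hm⟩
    by_cases hx : x ∈ X <;> by_cases hy : y ∈ X <;> by_cases hz : z ∈ X
    · exact absurd (Or.inl ⟨hx, hy, hz⟩) hnm
    · simp only [hε, if_pos hx, if_pos hy, if_neg hz]; norm_num
    · simp only [hε, if_pos hx, if_neg hy, if_pos hz]; norm_num
    · simp only [hε, if_pos hx, if_neg hy, if_neg hz]; norm_num
    · simp only [hε, if_neg hx, if_pos hy, if_pos hz]; norm_num
    · simp only [hε, if_neg hx, if_pos hy, if_neg hz]; norm_num
    · simp only [hε, if_neg hx, if_neg hy, if_pos hz]; norm_num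
    · exact absurd (Or.inr ⟨hcover x hx, hcover y hy, hcover z hz⟩) hnm
  have total : ∑ r ∈ Sph (1 : ZMod p), ∑ t : Pt p,
      ((1 : ℝ) + (ε (pmul r A + t) * ε (pmul r B + t)
        + ε (pmul r B + t) * ε (pmul r C + t)
        + ε (pmul r A + t) * ε (pmul r C + t))) = 0 :=
    Finset.sum_eq_zero fun r hr => Finset.sum_eq_zero fun t _ => hzero r hr t
  have hsplit : ∑ r ∈ Sph (1 : ZMod p), ∑ t : Pt p,
      ((1 : ℝ) + (ε (pmul r A + t) * ε (pmul r B + t)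
        + ε (pmul r B + t) * ε (pmul r C + t)
        + ε (pmul r A + t) * ε (pmul r C + t)))
      = ((p : ℝ) + 1) * (p:ℝ)^2
        + (Sd ε (sqNorm (B - A)) + Sd ε (sqNorm (C - B)) + Sd ε (sqNorm (C - A))) := by
    simp only [Finset.sum_add_distrib]
    have hones : ∑ r ∈ Sph (1 : ZMod p), ∑ t : Pt p, (1:ℝ) = ((p : ℝ) + 1) * (p:ℝ)^2 := by
      rw [Finset.sum_const, Finset.sum_const, Finset.card_univ]
      have hcard : Fintype.card (Pt p) = p^2 := by simp [Fintype.card_prod, ZMod.card, sq]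
      rw [hcard, card_sph_one hp3]
      simp only [nsmul_eq_mul, mul_one]
      push_cast
      ring
    rw [hones, count_pairs ε A B hnAB, count_pairs ε B C hnBC, count_pairs ε A C hnAC]
  have hS1 := sd_lower hp3 hp1000 ε hval hnAB
  have hS2 := sd_lower hp3 hp1000 ε hval hnBC
  have hS3 := sd_lower hp3 hp1000 ε hval hnAC
  have hpR : (1000 : ℝ) ≤ (p : ℝ) := by exact_mod_cast hp1000
  have hpos : (0:ℝ) < ((p:ℝ) + 1) * (p:ℝ)^2 / 4 := by positivity
  rw [hsplit] at total
  linarith
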